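/- Let C ⊆ ℂ² be a plane algebraic curve (the zero set of an irreducible polynomial of total degree greater than 1). Then the squared distance function is not constant on C × C: there exist points p₁, p₂, q₁, q₂ ∈ C with d(p₁,p₂) ≠ d(q₁,q₂). -/

import Mathlib

open scoped Matrix

noncomputable section

/-- Squared distance between two points of `ℂ²`. -/
def sqDist (p q : ℂ × ℂ) : ℂ := (p.1 - q.1) ^ 2 + (p.2 - q.2) ^ 2

/-- A complex orthogonal 2×2 matrix: `Aᵀ A = I`. -/
def IsOrtho (A : Matrix (Fin 2) (Fin 2) ℂ) : Prop := A.transpose * A = 1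

/-- The affine map `x ↦ A x + v` on `ℂ²`. -/
def euclApply (A : Matrix (Fin 2) (Fin 2) ℂ) (v : ℂ × ℂ) (p : ℂ × ℂ) : ℂ × ℂ :=
  (A 0 0 * p.1 + A 0 1 * p.2 + v.1, A 1 0 * p.1 + A 1 1 * p.2 + v.2)

/-- A plane algebraic curve: the zero set of an irreducible polynomial of total degree `> 1`. -/
def IsPlaneCurve (C : Set (ℂ × ℂ)) : Prop :=
  ∃ f : MvPolynomial (Fin 2) ℂ, Irreducible f ∧ 1 < f.totalDegree ∧
    C = {p : ℂ × ℂ | MvPolynomial.eval ![p.1, p.2] f = 0}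

open MvPolynomial

lemma auxVecEta (x : Fin 2 → ℂ) : ![x 0, x 1] = x := by
  funext i; fin_cases i <;> rfl

lemma auxFinSuccEquivC (a : ℂ) :
    finSuccEquiv ℂ 1 (C a) = Polynomial.C (C a) := by
  rw [← MvPolynomial.algebraMap_eq, AlgEquiv.commutes, Polynomial.algebraMap_apply,
    MvPolynomial.algebraMap_eq]

lemma auxFinSuccEquivC0 (a : ℂ) :
    finSuccEquiv ℂ 0 (C a) = Polynomial.C (C a) := by
  rw [← MvPolynomial.algebraMap_eq, AlgEquiv.commutes, Polynomial.algebraMap_apply,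
    MvPolynomial.algebraMap_eq]

lemma auxIsUnitEqC {u : MvPolynomial (Fin 2) ℂ} (h : IsUnit u) : ∃ c : ℂ, u = C c := by
  have h1 : IsUnit (finSuccEquiv ℂ 1 u) := h.map _
  obtain ⟨r, hr, hru⟩ := Polynomial.isUnit_iff.mp h1
  have h2 : IsUnit (finSuccEquiv ℂ 0 r) := hr.map _
  obtain ⟨s, hs, hsr⟩ := Polynomial.isUnit_iff.mp h2
  obtain ⟨c, rfl⟩ := MvPolynomial.C_surjective (Fin 0) s
  have hr' : r = C c := by
    apply (finSuccEquiv ℂ 0).injective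
    rw [← hsr, auxFinSuccEquivC0]
  refine ⟨c, (finSuccEquiv ℂ 1).injective ?_⟩
  rw [← hru, hr', auxFinSuccEquivC]

lemma auxKey (a b : ℂ) : finSuccEquiv ℂ 1 (X 0 + C a * X 1 + C b) =
    Polynomial.X + Polynomial.C (C a * X 0 + C b) := by
  have h1 : (X 1 : MvPolynomial (Fin 2) ℂ) = X (Fin.succ 0) := rfl
  rw [map_add, map_add, map_mul, h1, finSuccEquiv_X_zero, finSuccEquiv_X_succ,
    auxFinSuccEquivC, auxFinSuccEquivC, map_add, map_mul]
  ring

lemma auxLinIrr (a b : ℂ) :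
    Irreducible (X 0 + C a * X 1 + C b : MvPolynomial (Fin 2) ℂ) := by
  have : Irreducible (finSuccEquiv ℂ 1 (X 0 + C a * X 1 + C b)) := by
    rw [auxKey]
    exact (Polynomial.monic_X_add_C _).irreducible_of_degree_eq_one
      (Polynomial.degree_X_add_C _)
  exact (MulEquiv.irreducible_iff (finSuccEquiv ℂ 1).toMulEquiv).mp this

lemma auxLinDeg (a b : ℂ) :
    (X 0 + C a * X 1 + C b : MvPolynomial (Fin 2) ℂ).totalDegree ≤ 1 := by
  refine (totalDegree_add _ _).trans ?_
  simp only [totalDegree_C, max_le_iff]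
  refine ⟨(totalDegree_add _ _).trans ?_, Nat.zero_le 1⟩
  simp only [totalDegree_X, max_le_iff]
  refine ⟨le_rfl, (totalDegree_mul _ _).trans ?_⟩
  simp [totalDegree_C, totalDegree_X]

lemma auxDvdLin {f : MvPolynomial (Fin 2) ℂ} (hf : Irreducible f)
    (a b : ℂ) (hd : f ∣ X 0 + C a * X 1 + C b) : f.totalDegree ≤ 1 := by
  obtain ⟨c, hc⟩ := hd
  rcases (auxLinIrr a b).isUnit_or_isUnit hc with hu | hu
  · exact absurd hu hf.not_isUnit
  · obtain ⟨c₀, rfl⟩ := auxIsUnitEqC hu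
    have hc₀ : c₀ ≠ 0 := by
      rintro rfl
      simp only [map_zero] at hu
      exact not_isUnit_zero hu
    have hf' : f = (X 0 + C a * X 1 + C b) * C c₀⁻¹ := by
      rw [hc, mul_assoc, ← map_mul, mul_inv_cancel₀ hc₀, map_one, mul_one]
    calc f.totalDegree ≤ _ := hf' ▸ totalDegree_mul _ _
      _ ≤ 1 + 0 := add_le_add (auxLinDeg a b) (totalDegree_C _).le
      _ = 1 := rfl

theorem sqDist_not_constant_on_curve (C : Set (ℂ × ℂ)) (hC : IsPlaneCurve C) :
    ∃ p₁ ∈ C, ∃ p₂ ∈ C, ∃ q₁ ∈ C, ∃ q₂ ∈ C, sqDist p₁ p₂ ≠ sqDist q₁ q₂ := by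
  obtain ⟨f, hf, hdeg, rfl⟩ := hC
  by_contra hcon
  push_neg at hcon
  set I : Ideal (MvPolynomial (Fin 2) ℂ) := Ideal.span {f} with hIdef
  have hmemI : ∀ x : Fin 2 → ℂ, x ∈ zeroLocus ℂ I ↔ eval x f = 0 := by
    intro x
    constructor
    · intro hx; exact hx f (Ideal.subset_span rfl)
    · intro hx p hp
      obtain ⟨c, rfl⟩ := Ideal.mem_span_singleton.mp hp
      rw [map_mul, show aeval x f = 0 from hx, zero_mul]
  have hne : ∃ x : Fin 2 → ℂ, eval x f = 0 := by
    by_contra hS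
    push_neg at hS
    have hz : zeroLocus ℂ I = ∅ := by
      ext x
      simp only [Set.mem_empty_iff_false, iff_false]
      intro hx
      exact hS x ((hmemI x).mp hx)
    have h2 := vanishingIdeal_zeroLocus_eq_radical (K := ℂ) I
    rw [hz, vanishingIdeal_empty] at h2
    have h3 : (1 : MvPolynomial (Fin 2) ℂ) ∈ I.radical := h2 ▸ Submodule.mem_top
    obtain ⟨n, hn⟩ := Ideal.mem_radical_iff.mp h3
    rw [one_pow, hIdef, Ideal.mem_span_singleton] at hn
    exact hf.not_isUnit (isUnit_of_dvd_one hn)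
  obtain ⟨x₀, hx₀⟩ := hne
  set q : ℂ × ℂ := (x₀ 0, x₀ 1) with hqdef
  have hq : q ∈ {p : ℂ × ℂ | MvPolynomial.eval ![p.1, p.2] f = 0} := by
    show eval ![x₀ 0, x₀ 1] f = 0
    rw [auxVecEta]; exact hx₀
  have hzero : ∀ p ∈ {p : ℂ × ℂ | MvPolynomial.eval ![p.1, p.2] f = 0},
      (p.1 - q.1) ^ 2 + (p.2 - q.2) ^ 2 = 0 := by
    intro p hp
    have := hcon p hp q hq q hq q hq
    simpa [sqDist] using this
  have hg : (X 0 + C Complex.I * X 1 + C (-q.1 - Complex.I * q.2)) *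
      (X 0 + C (-Complex.I) * X 1 + C (-q.1 + Complex.I * q.2)) ∈
      vanishingIdeal ℂ (zeroLocus ℂ I) := by
    rw [mem_vanishingIdeal_iff]
    intro x hx
    have hp : (x 0, x 1) ∈ {p : ℂ × ℂ | MvPolynomial.eval ![p.1, p.2] f = 0} := by
      show eval ![x 0, x 1] f = 0
      rw [auxVecEta]; exact (hmemI x).mp hx
    have h0 := hzero _ hp
    simp only [map_mul, map_add, aeval_X, aeval_C, Algebra.algebraMap_self, RingHom.id_apply]
    linear_combination h0 - (x 1 - q.2) ^ 2 * Complex.I_sq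
  rw [vanishingIdeal_zeroLocus_eq_radical] at hg
  obtain ⟨n, hn⟩ := Ideal.mem_radical_iff.mp hg
  rw [hIdef, Ideal.mem_span_singleton] at hn
  have hprime : Prime f := UniqueFactorizationMonoid.irreducible_iff_prime.mp hf
  have hdvd := hprime.dvd_of_dvd_pow hn
  rcases hprime.2.2 _ _ hdvd with h | h
  · exact absurd (auxDvdLin hf _ _ h) (by omega)
  · exact absurd (auxDvdLin hf _ _ h) (by omega)

end
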